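/- Let (C, ⊗) be a closed symmetric monoidal category with pushouts. Given two pushout squares, one with horizontal maps g_b : A_b → X_b and g_f : A_f → X_f and vertical maps A_b → A_f, X_b → X_f, and one with horizontal maps h_b : B_b → Y_b and h_f : B_f → Y_f and vertical maps B_b → B_f, Y_b → Y_f, the row-wise pushout-product square, with horizontal maps the pushout products g_b □ h_b : (A_b ⊗ Y_b) ⊔_{A_b ⊗ B_b} (X_b ⊗ B_b) → X_b ⊗ Y_b and g_f □ h_f : (A_f ⊗ Y_f) ⊔_{A_f ⊗ B_f} (X_f ⊗ B_f) → X_f ⊗ Y_f, and with vertical maps induced by functoriality, is again a pushout square. -/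

import Mathlib

open CategoryTheory CategoryTheory.Limits MonoidalCategory

universe v u

variable {C : Type u} [Category.{v} C] [MonoidalCategory C]

/-- The pushout product `f □ g : (A ⊗ Y) ⊔_{A ⊗ B} (X ⊗ B) ⟶ X ⊗ Y` of two
morphisms `f : A ⟶ X` and `g : B ⟶ Y` in a monoidal category. -/
noncomputable def pushoutProd {A X B Y : C} (f : A ⟶ X) (g : B ⟶ Y)
    [HasPushout (A ◁ g) (f ▷ B)] :
    pushout (A ◁ g) (f ▷ B) ⟶ X ⊗ Y :=
  pushout.desc (f ▷ Y) (X ◁ g) (whisker_exchange f g)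

/-- In a closed symmetric monoidal category, tensoring on the right preserves colimits. -/
noncomputable instance tensorRightPreservesColimits [SymmetricCategory C] [MonoidalClosed C]
    (X : C) : PreservesColimits (tensorRight X) :=
  preservesColimits_of_natIso
    (show tensorLeft X ≅ tensorRight X from
      NatIso.ofComponents (fun Y => β_ X Y) (by intros; simp))

/-- In a closed symmetric monoidal category with pushouts, the
row-wise pushout product of two pushout squares is again a pushout square. -/
theorem stmt10 [SymmetricCategory C] [MonoidalClosed C] [HasPushouts C]
    {Ab Xb Af Xf Bb Yb Bf Yf : C}
    (gb : Ab ⟶ Xb) (gf : Af ⟶ Xf) (av : Ab ⟶ Af) (xv : Xb ⟶ Xf)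
    (hb : Bb ⟶ Yb) (hf : Bf ⟶ Yf) (bv : Bb ⟶ Bf) (yv : Yb ⟶ Yf)
    (sq₁ : IsPushout gb av xv gf) (sq₂ : IsPushout hb bv yv hf)
    (q : pushout (Ab ◁ hb) (gb ▷ Bb) ⟶ pushout (Af ◁ hf) (gf ▷ Bf))
    (hq₁ : pushout.inl (Ab ◁ hb) (gb ▷ Bb) ≫ q =
      (av ⊗ₘ yv) ≫ pushout.inl (Af ◁ hf) (gf ▷ Bf))
    (hq₂ : pushout.inr (Ab ◁ hb) (gb ▷ Bb) ≫ q =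
      (xv ⊗ₘ bv) ≫ pushout.inr (Af ◁ hf) (gf ▷ Bf)) :
    IsPushout (pushoutProd gb hb) q (xv ⊗ₘ yv) (pushoutProd gf hf) := by
  -- the four tensored pushout squares
  have P1 : IsPushout (gb ▷ Yb) (av ▷ Yb) (xv ▷ Yb) (gf ▷ Yb) := by
    simpa using sq₁.map (tensorRight Yb)
  have P4 : IsPushout (gb ▷ Bb) (av ▷ Bb) (xv ▷ Bb) (gf ▷ Bb) := by
    simpa using sq₁.map (tensorRight Bb)
  have P2 : IsPushout (Xf ◁ hb) (Xf ◁ bv) (Xf ◁ yv) (Xf ◁ hf) := by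
    simpa using sq₂.map (tensorLeft Xf)
  have P3 : IsPushout (Af ◁ hb) (Af ◁ bv) (Af ◁ yv) (Af ◁ hf) := by
    simpa using sq₂.map (tensorLeft Af)
  have comm : pushoutProd gb hb ≫ (xv ⊗ₘ yv) = q ≫ pushoutProd gf hf := by
    apply pushout.hom_ext
    · rw [reassoc_of% hq₁]
      simp only [pushoutProd, pushout.inl_desc_assoc, pushout.inl_desc]
      rw [← tensorHom_id, ← tensorHom_id, tensorHom_comp_tensorHom, tensorHom_comp_tensorHom, sq₁.w,
        Category.comp_id, Category.id_comp]
    · rw [reassoc_of% hq₂]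
      simp only [pushoutProd, pushout.inr_desc_assoc, pushout.inr_desc]
      rw [← id_tensorHom, ← id_tensorHom, tensorHom_comp_tensorHom, tensorHom_comp_tensorHom, sq₂.w,
        Category.comp_id, Category.id_comp]
  have key : ∀ {T : C} (t₁ : Xb ⊗ Yb ⟶ T) (t₂ : pushout (Af ◁ hf) (gf ▷ Bf) ⟶ T),
      pushoutProd gb hb ≫ t₁ = q ≫ t₂ →
      ∃! u : Xf ⊗ Yf ⟶ T, (xv ⊗ₘ yv) ≫ u = t₁ ∧ pushoutProd gf hf ≫ u = t₂ := by
    intro T t₁ t₂ hc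
    set a : Af ⊗ Yf ⟶ T := pushout.inl (Af ◁ hf) (gf ▷ Bf) ≫ t₂ with ha
    set b : Xf ⊗ Bf ⟶ T := pushout.inr (Af ◁ hf) (gf ▷ Bf) ≫ t₂ with hbdef
    have hab : Af ◁ hf ≫ a = gf ▷ Bf ≫ b := by
      rw [ha, hbdef, ← Category.assoc, ← Category.assoc, pushout.condition]
    have E1 : gb ▷ Yb ≫ t₁ = (av ⊗ₘ yv) ≫ a := by
      have h := pushout.inl (Ab ◁ hb) (gb ▷ Bb) ≫= hc
      rw [pushoutProd, pushout.inl_desc_assoc, reassoc_of% hq₁] at h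
      simpa [ha] using h
    have E2 : Xb ◁ hb ≫ t₁ = (xv ⊗ₘ bv) ≫ b := by
      have h := pushout.inr (Ab ◁ hb) (gb ▷ Bb) ≫= hc
      rw [pushoutProd, pushout.inr_desc_assoc, reassoc_of% hq₂] at h
      simpa [hbdef] using h
    have w1 : gb ▷ Yb ≫ t₁ = av ▷ Yb ≫ (Af ◁ yv ≫ a) := by
      rw [E1, MonoidalCategory.tensorHom_def, Category.assoc]
    set u₁ : Xf ⊗ Yb ⟶ T := P1.desc t₁ (Af ◁ yv ≫ a) w1 with hu₁def
    have hu₁l : xv ▷ Yb ≫ u₁ = t₁ := P1.inl_desc _ _ _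
    have hu₁r : gf ▷ Yb ≫ u₁ = Af ◁ yv ≫ a := P1.inr_desc _ _ _
    have compat : Xf ◁ hb ≫ u₁ = Xf ◁ bv ≫ b := by
      apply P4.hom_ext
      · rw [← Category.assoc, ← whisker_exchange, Category.assoc, hu₁l, E2,
          MonoidalCategory.tensorHom_def]
        simp [hbdef]
      · rw [← Category.assoc, ← whisker_exchange, Category.assoc, hu₁r,
          ← Category.assoc, ← MonoidalCategory.whiskerLeft_comp, sq₂.w,
          MonoidalCategory.whiskerLeft_comp, Category.assoc, hab,
          ← Category.assoc, whisker_exchange, Category.assoc]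
    set u : Xf ⊗ Yf ⟶ T := P2.desc u₁ b compat with hudef
    have hul : Xf ◁ yv ≫ u = u₁ := P2.inl_desc _ _ _
    have hur : Xf ◁ hf ≫ u = b := P2.inr_desc _ _ _
    have fact1 : (xv ⊗ₘ yv) ≫ u = t₁ := by
      rw [MonoidalCategory.tensorHom_def, Category.assoc, hul, hu₁l]
    have keyinl : gf ▷ Yf ≫ u = a := by
      apply P3.hom_ext
      · rw [← Category.assoc, whisker_exchange, Category.assoc, hul, hu₁r]
      · rw [← Category.assoc, whisker_exchange, Category.assoc, hur, hab]
    have fact2 : pushoutProd gf hf ≫ u = t₂ := by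
      apply pushout.hom_ext
      · rw [pushoutProd, pushout.inl_desc_assoc, keyinl, ha]
      · rw [pushoutProd, pushout.inr_desc_assoc, hur, hbdef]
    refine ⟨u, ⟨fact1, fact2⟩, ?_⟩
    rintro m ⟨hm1, hm2⟩
    apply P2.hom_ext
    · rw [hul]
      apply P1.hom_ext
      · rw [← Category.assoc, ← MonoidalCategory.tensorHom_def, hm1, hu₁l]
      · have : gf ▷ Yf ≫ m = a := by
          have h := pushout.inl (Af ◁ hf) (gf ▷ Bf) ≫= hm2
          rw [pushoutProd, pushout.inl_desc_assoc] at h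
          rw [h, ha]
        rw [← Category.assoc, ← whisker_exchange, Category.assoc, this, hu₁r]
    · have h := pushout.inr (Af ◁ hf) (gf ▷ Bf) ≫= hm2
      rw [pushoutProd, pushout.inr_desc_assoc] at h
      rw [h, hur, hbdef]
  refine IsPushout.of_isColimit' ⟨comm⟩
    (PushoutCocone.IsColimit.mk _
      (fun s => (key s.inl s.inr s.condition).choose)
      (fun s => (key s.inl s.inr s.condition).choose_spec.1.1)
      (fun s => (key s.inl s.inr s.condition).choose_spec.1.2)
      (fun s m h1 h2 => (key s.inl s.inr s.condition).choose_spec.2 m ⟨h1, h2⟩))
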